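/- For all x, y ∈ ℝⁿ = (Fin n → ℝ), the minimum over all permutations σ ∈ Equiv.Perm (Fin n) of the Euclidean distance ‖x − σ • y‖ (where (σ • y) i = y(σ⁻¹ i)) equals the Euclidean distance ‖s(x) − s(y)‖ between the sorted versions of x and y. In particular, the quotient metric on the orbit space ℝⁿ/S_n, defined by d([x],[y]) = min_{σ ∈ S_n} ‖x − σ • y‖, is realized by sorting, so the induced bijection s' : ℝⁿ/S_n → Z_s onto the set of monotone vectors (with the Euclidean metric) is an isometry. -/
import Mathlib


/-- The action of `Equiv.Perm (Fin n)` on `Fin n → ℝ` by permuting coordinates: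
`(σ • z) i = z (σ⁻¹ i)`. -/
instance permSMul (n : ℕ) : MulAction (Equiv.Perm (Fin n)) (Fin n → ℝ) where
  smul σ z := fun i => z (σ⁻¹ i)
  one_smul _ := rfl
  mul_smul _ _ _ := rfl

/-- The sorting map: `sortVec z` has the same multiset of coordinates as `z`,
arranged in ascending (monotone) order. -/
noncomputable def sortVec {n : ℕ} (z : Fin n → ℝ) : Fin n → ℝ := z ∘ Tuple.sort z

lemma sortVec_sq_sum {n : ℕ} (z : Fin n → ℝ) :
    ∑ i, sortVec z i ^ 2 = ∑ i, z i ^ 2 :=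
  Equiv.sum_comp (Tuple.sort z) (fun i => z i ^ 2)

lemma inner_le {n : ℕ} (x y : Fin n → ℝ) (π : Equiv.Perm (Fin n)) :
    ∑ i, x i * y (π i) ≤ ∑ i, sortVec x i * sortVec y i := by
  have hmv : Monovary (sortVec x) (sortVec y) :=
    (Tuple.monotone_sort x).monovary (Tuple.monotone_sort y)
  have h := hmv.sum_mul_comp_perm_le_sum_mul
    (σ := (Tuple.sort y)⁻¹ * π * Tuple.sort x)
  calc ∑ i, x i * y (π i)
      = ∑ j, x (Tuple.sort x j) * y (π (Tuple.sort x j)) :=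
        (Equiv.sum_comp (Tuple.sort x) (fun i => x i * y (π i))).symm
    _ = ∑ j, sortVec x j * sortVec y (((Tuple.sort y)⁻¹ * π * Tuple.sort x) j) := by
        refine Finset.sum_congr rfl fun j _ => ?_
        simp [sortVec]
    _ ≤ ∑ i, sortVec x i * sortVec y i := h

lemma dist_sq_le {n : ℕ} (x y : Fin n → ℝ) (σ : Equiv.Perm (Fin n)) :
    ∑ i, (sortVec x i - sortVec y i) ^ 2 ≤ ∑ i, (x i - (σ • y) i) ^ 2 := by
  have hsmul : ∀ i, (σ • y) i = y (σ⁻¹ i) := fun _ => rfl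
  have expand : ∀ (a b : Fin n → ℝ),
      ∑ i, (a i - b i) ^ 2 = ∑ i, a i ^ 2 + ∑ i, b i ^ 2 - 2 * ∑ i, a i * b i := by
    intro a b
    rw [← Finset.sum_add_distrib, Finset.mul_sum, ← Finset.sum_sub_distrib]
    exact Finset.sum_congr rfl fun i _ => by ring
  have hy : ∑ i, y (σ⁻¹ i) ^ 2 = ∑ i, y i ^ 2 :=
    Equiv.sum_comp σ⁻¹ (fun i => y i ^ 2)
  have hinner : ∑ i, x i * y (σ⁻¹ i) ≤ ∑ i, sortVec x i * sortVec y i :=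
    inner_le x y σ⁻¹
  simp only [hsmul]
  rw [expand, expand, sortVec_sq_sum, sortVec_sq_sum, hy]
  linarith

lemma perm_exists_eq {n : ℕ} (x y : Fin n → ℝ) :
    ∃ σ : Equiv.Perm (Fin n),
      ∑ i, (x i - (σ • y) i) ^ 2 = ∑ i, (sortVec x i - sortVec y i) ^ 2 := by
  refine ⟨Tuple.sort x * (Tuple.sort y)⁻¹, ?_⟩
  have hsmul : ∀ i, ((Tuple.sort x * (Tuple.sort y)⁻¹ : Equiv.Perm (Fin n)) • y) i
      = y ((Tuple.sort y) ((Tuple.sort x)⁻¹ i)) := fun _ => rfl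
  simp only [hsmul]
  rw [← Equiv.sum_comp (Tuple.sort x)
    (fun i => (x i - y ((Tuple.sort y) ((Tuple.sort x)⁻¹ i))) ^ 2)]
  refine Finset.sum_congr rfl fun j _ => ?_
  simp [sortVec]

/-- The quotient metric
`d([x],[y]) = min_{σ ∈ S_n} ‖x − σ • y‖` (Euclidean norm) is realized by sorting: the
minimum over all permutations equals the Euclidean distance between the sorted versions,
and it is attained.  Hence the induced bijection onto the set of monotone vectors is an
isometry. -/
theorem stmt_10 (n : ℕ) (x y : Fin n → ℝ) :
    (⨅ σ : Equiv.Perm (Fin n), Real.sqrt (∑ i, (x i - (σ • y) i) ^ 2)) =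
      Real.sqrt (∑ i, (sortVec x i - sortVec y i) ^ 2) ∧
    ∃ σ : Equiv.Perm (Fin n),
      Real.sqrt (∑ i, (x i - (σ • y) i) ^ 2) =
        Real.sqrt (∑ i, (sortVec x i - sortVec y i) ^ 2) := by
  obtain ⟨σ₀, hσ₀⟩ := perm_exists_eq x y
  have hle : ∀ σ : Equiv.Perm (Fin n),
      Real.sqrt (∑ i, (sortVec x i - sortVec y i) ^ 2)
        ≤ Real.sqrt (∑ i, (x i - (σ • y) i) ^ 2) := fun σ =>
    Real.sqrt_le_sqrt (dist_sq_le x y σ)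
  constructor
  · apply le_antisymm
    · exact (ciInf_le (Finite.bddBelow_range _) σ₀).trans (le_of_eq (by rw [hσ₀]))
    · exact le_ciInf hle
  · exact ⟨σ₀, by rw [hσ₀]⟩
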